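/- (Energy uniqueness of absolute energy minimizers.) In the abstract trajectory setting with energy readout e, suppose additionally that for every y ∈ Y and u ∈ 𝒰(y) the function t ↦ e(u(t)) is bounded. If u¹ and u² are both absolute energy minimizers in the same set 𝒰(y), then e(u¹(t)) = e(u²(t)) for Lebesgue-almost every t ∈ [0,∞). -/

import Mathlib

open MeasureTheory

/-- Auxiliary integrability: an a.e.-bounded measurable function times a decaying
exponential is integrable on `[0, ∞)`. -/
lemma aux_integrableOn_exp_mul {f : ℝ → ℝ} (hf : Measurable f) {C lam : ℝ} (hlam : 0 < lam)
    (hC : ∀ t, 0 ≤ t → |f t| ≤ C) :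
    IntegrableOn (fun t => Real.exp (-lam * t) * f t) (Set.Ici 0) := by
  have hbound : IntegrableOn (fun t => C * Real.exp (-lam * t)) (Set.Ici (0:ℝ)) := by
    rw [integrableOn_Ici_iff_integrableOn_Ioi]
    exact (exp_neg_integrableOn_Ioi 0 hlam).const_mul C
  refine Integrable.mono' hbound ?_ ?_
  · exact (((measurable_id.const_mul (-lam)).exp).mul hf).aestronglyMeasurable
  · refine (ae_restrict_iff' measurableSet_Ici).2 (ae_of_all _ fun t ht => ?_)
    have h1 : 0 < Real.exp (-lam * t) := Real.exp_pos _
    have h2 := hC t ht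
    rw [Real.norm_eq_abs, abs_mul, abs_of_pos h1]
    calc Real.exp (-lam * t) * |f t| ≤ Real.exp (-lam * t) * C := by
          exact mul_le_mul_of_nonneg_left h2 h1.le
      _ = C * Real.exp (-lam * t) := mul_comm _ _

/-- Lerch-type lemma: an integrable function supported on `[0, ∞)` all of whose
"discrete Laplace moments" vanish is a.e. zero. -/
lemma aux_lerch {H : ℝ → ℝ} (hH : Integrable H) (hH0 : ∀ t < (0:ℝ), H t = 0)
    (hmom : ∀ n : ℕ, ∫ t, (Real.exp (-t)) ^ n * H t = 0) :
    ∀ᵐ t, H t = 0 := by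
  -- generic integrability of `φ (exp (-t)) * H t` for `φ` bounded on `[0,1]`
  have hInt : ∀ (φ : ℝ → ℝ) (M : ℝ), Measurable φ → (∀ x ∈ Set.Icc (0:ℝ) 1, |φ x| ≤ M) →
      Integrable (fun t => φ (Real.exp (-t)) * H t) := by
    intro φ M hφm hφ
    refine Integrable.mono' (hH.abs.const_mul M)
      (((hφm.comp measurable_neg.exp).aestronglyMeasurable).mul
        hH.aestronglyMeasurable) (ae_of_all _ fun t => ?_)
    rcases lt_or_ge t 0 with ht | ht
    · simp [hH0 t ht]
    · have hx : Real.exp (-t) ∈ Set.Icc (0:ℝ) 1 := by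
        constructor
        · exact (Real.exp_pos _).le
        · simpa using Real.exp_le_exp.mpr (neg_nonpos.mpr ht)
      rw [Real.norm_eq_abs, abs_mul]
      exact mul_le_mul_of_nonneg_right (hφ _ hx) (abs_nonneg _)
  -- vanishing of integrals against all polynomials in `exp (-t)`
  have hmono_int : ∀ n : ℕ, Integrable (fun t => (Real.exp (-t)) ^ n * H t) := by
    intro n
    refine hInt (fun x => x ^ n) 1 (measurable_id.pow_const n) (fun x hx => ?_)
    rw [abs_pow]
    exact pow_le_one₀ (abs_nonneg _) (abs_le.mpr ⟨by linarith [hx.1], hx.2⟩)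
  have hpoly : ∀ p : Polynomial ℝ, ∫ t, p.eval (Real.exp (-t)) * H t = 0 := by
    intro p
    calc ∫ t, p.eval (Real.exp (-t)) * H t
        = ∫ t, ∑ i ∈ Finset.range (p.natDegree + 1),
            p.coeff i * ((Real.exp (-t)) ^ i * H t) := by
          congr 1; funext t
          rw [Polynomial.eval_eq_sum_range, Finset.sum_mul]
          exact Finset.sum_congr rfl fun i _ => by ring
      _ = ∑ i ∈ Finset.range (p.natDegree + 1),
            ∫ t, p.coeff i * ((Real.exp (-t)) ^ i * H t) :=
          integral_finset_sum _ (fun i _ => (hmono_int i).const_mul _)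
      _ = 0 := by
          refine Finset.sum_eq_zero fun i _ => ?_
          rw [integral_const_mul, hmom i, mul_zero]
  -- vanishing of integrals against all compactly supported continuous functions
  have hcont : ∀ g : ℝ → ℝ, Continuous g → HasCompactSupport g → ∫ t, g t * H t = 0 := by
    intro g hgc hgs
    obtain ⟨M, hM₀⟩ := hgc.abs.bounded_above_of_compact_support hgs.abs
    have hM : ∀ x, |g x| ≤ M := fun x => by simpa using hM₀ x
    obtain ⟨R, hR⟩ := hgs.isBounded.subset_closedBall 0
    set G : ℝ → ℝ := fun x => if 0 < x then g (-Real.log x) else 0 with hGdef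
    have hGg : ∀ t : ℝ, G (Real.exp (-t)) = g t := fun t => by
      rw [hGdef]
      simp only [if_pos (Real.exp_pos (-t)), Real.log_exp, neg_neg]
    have hG0 : ∀ x ∈ Metric.ball (0:ℝ) (Real.exp (-(R + 1))), G x = 0 := by
      intro x hx
      rw [Metric.mem_ball, Real.dist_eq, sub_zero] at hx
      by_cases h : 0 < x
      · rw [hGdef]; simp only [if_pos h]
        apply image_eq_zero_of_notMem_tsupport
        intro hmem
        have h1 := hR hmem
        rw [Metric.mem_closedBall, Real.dist_eq, sub_zero] at h1
        have hlog : Real.log x < -(R + 1) :=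
          (Real.log_lt_iff_lt_exp h).mpr (by rwa [abs_of_pos h] at hx)
        have h2 : -Real.log x ≤ |(-Real.log x)| := le_abs_self _
        have h3 : 0 ≤ R := by
          have := abs_nonneg (-Real.log x)
          linarith [h1, this]
        linarith [h1, h2]
      · rw [hGdef]; simp [h]
    have hGcont : Continuous G := by
      rw [continuous_iff_continuousAt]
      intro x
      rcases lt_trichotomy x 0 with hx | hx | hx
      · have hev : G =ᶠ[nhds x] fun _ => 0 := by
          filter_upwards [Iio_mem_nhds hx] with y hy
          have hy' : y < 0 := hy
          rw [hGdef]; simp [not_lt.mpr hy'.le]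
        exact (continuousAt_congr hev).mpr continuousAt_const
      · subst hx
        have hev : G =ᶠ[nhds (0:ℝ)] fun _ => 0 := by
          filter_upwards [Metric.ball_mem_nhds 0 (Real.exp_pos (-(R + 1)))] with y hy
          exact hG0 y hy
        exact (continuousAt_congr hev).mpr continuousAt_const
      · have hev : G =ᶠ[nhds x] fun y => g (-Real.log y) := by
          filter_upwards [Ioi_mem_nhds hx] with y hy
          have hy' : 0 < y := hy
          rw [hGdef]; simp [hy']
        refine (continuousAt_congr hev).mpr ?_
        exact hgc.continuousAt.comp ((Real.continuousAt_log hx.ne').neg)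
    have hGbd : ∀ x ∈ Set.Icc (0:ℝ) 1, |G x| ≤ max M 0 := by
      intro x _
      by_cases h : 0 < x
      · have hx : G x = g (-Real.log x) := by rw [hGdef]; simp [h]
        rw [hx]
        exact le_trans (hM _) (le_max_left _ _)
      · have hx : G x = 0 := by rw [hGdef]; simp [h]
        rw [hx]; simp
    have hIg : Integrable (fun t => G (Real.exp (-t)) * H t) :=
      hInt G (max M 0) hGcont.measurable hGbd
    have key : ∀ ε > (0:ℝ), |∫ t, G (Real.exp (-t)) * H t| ≤ ε * ∫ t, |H t| := by
      intro ε hε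
      obtain ⟨p, hp⟩ := exists_polynomial_near_continuousMap 0 1
        (ContinuousMap.restrict (Set.Icc 0 1) ⟨G, hGcont⟩) ε hε
      have happrox : ∀ x ∈ Set.Icc (0:ℝ) 1, |G x - p.eval x| ≤ ε := by
        intro x hx
        have h1 := ContinuousMap.norm_coe_le_norm
          (p.toContinuousMapOn (Set.Icc (0:ℝ) 1) -
            ContinuousMap.restrict (Set.Icc 0 1) ⟨G, hGcont⟩) ⟨x, hx⟩
        simp only [ContinuousMap.sub_apply, Polynomial.toContinuousMapOn_apply,
          Polynomial.toContinuousMap_apply, ContinuousMap.restrict_apply,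
          ContinuousMap.coe_mk, Real.norm_eq_abs] at h1
        rw [abs_sub_comm]
        exact le_trans h1 hp.le
      have hIp : Integrable (fun t => p.eval (Real.exp (-t)) * H t) := by
        refine hInt _ ‖p.toContinuousMapOn (Set.Icc (0:ℝ) 1)‖
          (Polynomial.continuous p).measurable (fun x hx => ?_)
        have h1 := ContinuousMap.norm_coe_le_norm
          (p.toContinuousMapOn (Set.Icc (0:ℝ) 1)) ⟨x, hx⟩
        simpa using h1
      have hdiff : ∫ t, G (Real.exp (-t)) * H t
          = ∫ t, (G (Real.exp (-t)) - p.eval (Real.exp (-t))) * H t := by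
        have : (fun t => (G (Real.exp (-t)) - p.eval (Real.exp (-t))) * H t)
            = fun t => G (Real.exp (-t)) * H t - p.eval (Real.exp (-t)) * H t :=
          funext fun t => by ring
        rw [this, integral_sub hIg hIp, hpoly p, sub_zero]
      rw [hdiff, ← integral_const_mul]
      have := norm_integral_le_of_norm_le (f := fun t =>
          (G (Real.exp (-t)) - p.eval (Real.exp (-t))) * H t)
          (g := fun t => ε * |H t|) (hH.abs.const_mul ε) ?_
      · simpa using this
      · refine ae_of_all _ fun t => ?_
        rcases lt_or_ge t 0 with ht | ht
        · simp [hH0 t ht]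
        · have hx : Real.exp (-t) ∈ Set.Icc (0:ℝ) 1 :=
            ⟨(Real.exp_pos _).le, by simpa using Real.exp_le_exp.mpr (neg_nonpos.mpr ht)⟩
          rw [Real.norm_eq_abs, abs_mul]
          exact mul_le_mul_of_nonneg_right (happrox _ hx) (abs_nonneg _)
    have hzero : ∫ t, G (Real.exp (-t)) * H t = 0 := by
      by_contra hne
      have hIpos : 0 < |∫ t, G (Real.exp (-t)) * H t| := abs_pos.mpr hne
      set I := |∫ t, G (Real.exp (-t)) * H t| with hI
      set c := ∫ t, |H t| with hc
      have hcnn : 0 ≤ c := integral_nonneg fun t => abs_nonneg _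
      have hk := key (I / (c + 1)) (by positivity)
      have : I / (c + 1) * c < I := by
        rw [div_mul_eq_mul_div, div_lt_iff₀ (by linarith)]
        nlinarith
      linarith
    calc ∫ t, g t * H t = ∫ t, G (Real.exp (-t)) * H t := by
          congr 1; funext t; rw [hGg]
      _ = 0 := hzero
  -- conclude via smooth test functions
  refine ae_eq_zero_of_integral_contDiff_smul_eq_zero hH.locallyIntegrable
    fun g hg hgsupp => ?_
  simp_rw [smul_eq_mul]
  exact hcont g hg.continuous hgsupp

/-- Energy uniqueness of absolute energy minimizers (Theorem AT1, uniqueness of the energy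
component): two absolute energy minimizers in the same solution set have a.e. equal energy
profiles. -/
theorem absolute_energy_minimizer_energy_unique {Y : Type*}
    (𝒰 : Y → Set (ℝ → Y)) (e : Y → ℝ)
    (hmono : ∀ y, ∀ u ∈ 𝒰 y, AntitoneOn (fun t => e (u t)) (Set.Ici 0))
    (hnonneg : ∀ y, ∀ u ∈ 𝒰 y, ∀ t, 0 ≤ t → 0 ≤ e (u t))
    (hbdd : ∀ y, ∀ u ∈ 𝒰 y, ∃ C, ∀ t, 0 ≤ t → e (u t) ≤ C)
    (y : Y) (u₁ u₂ : ℝ → Y) (hu₁ : u₁ ∈ 𝒰 y) (hu₂ : u₂ ∈ 𝒰 y)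
    (habs₁ : ∀ w ∈ 𝒰 y, ∃ lam₀ > (0:ℝ), ∀ lam, lam₀ ≤ lam →
      (∫ t in Set.Ici (0:ℝ), Real.exp (-lam * t) * e (u₁ t))
        ≤ ∫ t in Set.Ici (0:ℝ), Real.exp (-lam * t) * e (w t))
    (habs₂ : ∀ w ∈ 𝒰 y, ∃ lam₀ > (0:ℝ), ∀ lam, lam₀ ≤ lam →
      (∫ t in Set.Ici (0:ℝ), Real.exp (-lam * t) * e (u₂ t))
        ≤ ∫ t in Set.Ici (0:ℝ), Real.exp (-lam * t) * e (w t)) :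
    ∀ᵐ t ∂(volume.restrict (Set.Ici (0:ℝ))), e (u₁ t) = e (u₂ t) := by
  classical
  set g₁ : ℝ → ℝ := fun t => e (u₁ (max t 0)) with hg₁def
  set g₂ : ℝ → ℝ := fun t => e (u₂ (max t 0)) with hg₂def
  have hanti₁ : Antitone g₁ := fun s t hst =>
    hmono y u₁ hu₁ (le_max_right s 0) (le_max_right t 0) (max_le_max hst le_rfl)
  have hanti₂ : Antitone g₂ := fun s t hst =>
    hmono y u₂ hu₂ (le_max_right s 0) (le_max_right t 0) (max_le_max hst le_rfl)
  have hmeas₁ : Measurable g₁ := hanti₁.measurable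
  have hmeas₂ : Measurable g₂ := hanti₂.measurable
  obtain ⟨C₁, hC₁⟩ := hbdd y u₁ hu₁
  obtain ⟨C₂, hC₂⟩ := hbdd y u₂ hu₂
  have hb₁ : ∀ t, |g₁ t| ≤ C₁ := fun t => by
    rw [abs_of_nonneg (hnonneg y u₁ hu₁ _ (le_max_right _ _))]
    exact hC₁ _ (le_max_right _ _)
  have hb₂ : ∀ t, |g₂ t| ≤ C₂ := fun t => by
    rw [abs_of_nonneg (hnonneg y u₂ hu₂ _ (le_max_right _ _))]
    exact hC₂ _ (le_max_right _ _)
  have hbsub : ∀ t, |g₁ t - g₂ t| ≤ C₁ + C₂ := fun t => by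
    calc |g₁ t - g₂ t| ≤ |g₁ t| + |g₂ t| := abs_sub _ _
      _ ≤ C₁ + C₂ := add_le_add (hb₁ t) (hb₂ t)
  obtain ⟨lam₁, hlam₁pos, hlam₁⟩ := habs₁ u₂ hu₂
  obtain ⟨lam₂, hlam₂pos, hlam₂⟩ := habs₂ u₁ hu₁
  set Λ := max lam₁ lam₂ with hΛdef
  have hΛpos : 0 < Λ := lt_of_lt_of_le hlam₁pos (le_max_left _ _)
  have hTeq : ∀ lam, Λ ≤ lam →
      (∫ t in Set.Ici (0:ℝ), Real.exp (-lam * t) * e (u₁ t))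
        = ∫ t in Set.Ici (0:ℝ), Real.exp (-lam * t) * e (u₂ t) :=
    fun lam h => le_antisymm (hlam₁ lam (le_trans (le_max_left _ _) h))
      (hlam₂ lam (le_trans (le_max_right _ _) h))
  have hg_eq₁ : ∀ lam : ℝ, (∫ t in Set.Ici (0:ℝ), Real.exp (-lam * t) * e (u₁ t))
      = ∫ t in Set.Ici (0:ℝ), Real.exp (-lam * t) * g₁ t :=
    fun lam => setIntegral_congr_fun measurableSet_Ici
      (fun t ht => by rw [hg₁def]; simp [max_eq_left (Set.mem_Ici.mp ht)])
  have hg_eq₂ : ∀ lam : ℝ, (∫ t in Set.Ici (0:ℝ), Real.exp (-lam * t) * e (u₂ t))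
      = ∫ t in Set.Ici (0:ℝ), Real.exp (-lam * t) * g₂ t :=
    fun lam => setIntegral_congr_fun measurableSet_Ici
      (fun t ht => by rw [hg₂def]; simp [max_eq_left (Set.mem_Ici.mp ht)])
  set H : ℝ → ℝ :=
    Set.indicator (Set.Ici 0) (fun t => Real.exp (-Λ * t) * (g₁ t - g₂ t)) with hHdef
  have hI₁ : ∀ lam : ℝ, 0 < lam →
      IntegrableOn (fun t => Real.exp (-lam * t) * g₁ t) (Set.Ici 0) :=
    fun lam hl => aux_integrableOn_exp_mul hmeas₁ hl (fun t _ => hb₁ t)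
  have hI₂ : ∀ lam : ℝ, 0 < lam →
      IntegrableOn (fun t => Real.exp (-lam * t) * g₂ t) (Set.Ici 0) :=
    fun lam hl => aux_integrableOn_exp_mul hmeas₂ hl (fun t _ => hb₂ t)
  have hIsub : ∀ lam : ℝ, 0 < lam →
      IntegrableOn (fun t => Real.exp (-lam * t) * (g₁ t - g₂ t)) (Set.Ici 0) :=
    fun lam hl => aux_integrableOn_exp_mul (hmeas₁.sub hmeas₂) hl (fun t _ => hbsub t)
  have hHint : Integrable H :=
    (hIsub Λ hΛpos).integrable_indicator measurableSet_Ici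
  have hH0 : ∀ t < (0:ℝ), H t = 0 := fun t ht =>
    Set.indicator_of_notMem (by simpa using not_le.mpr ht) _
  have hmom : ∀ n : ℕ, ∫ t, (Real.exp (-t)) ^ n * H t = 0 := by
    intro n
    have hrw : (fun t => (Real.exp (-t)) ^ n * H t)
        = Set.indicator (Set.Ici 0)
            (fun t => Real.exp (-(Λ + n) * t) * (g₁ t - g₂ t)) := by
      funext t
      by_cases ht : t ∈ Set.Ici (0:ℝ)
      · rw [hHdef]
        rw [Set.indicator_of_mem ht, Set.indicator_of_mem ht, ← mul_assoc]
        congr 1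
        rw [← Real.exp_nat_mul, ← Real.exp_add]
        congr 1
        ring
      · rw [hHdef, Set.indicator_of_notMem ht, Set.indicator_of_notMem ht, mul_zero]
    rw [hrw, integral_indicator measurableSet_Ici]
    have hsplit : ∫ t in Set.Ici (0:ℝ), Real.exp (-(Λ + n) * t) * (g₁ t - g₂ t)
        = (∫ t in Set.Ici (0:ℝ), Real.exp (-(Λ + n) * t) * g₁ t)
          - ∫ t in Set.Ici (0:ℝ), Real.exp (-(Λ + n) * t) * g₂ t := by
      have hpos : (0:ℝ) < Λ + n := by positivity
      rw [← integral_sub (hI₁ _ hpos) (hI₂ _ hpos)]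
      congr 1; funext t; ring
    rw [hsplit, ← hg_eq₁, ← hg_eq₂, hTeq (Λ + n) (le_add_of_nonneg_right (Nat.cast_nonneg n)),
      sub_self]
  have hae := aux_lerch hHint hH0 hmom
  filter_upwards [ae_restrict_of_ae hae, ae_restrict_mem measurableSet_Ici] with t hHt hmem
  rw [hHdef, Set.indicator_of_mem hmem] at hHt
  have hexp : Real.exp (-Λ * t) ≠ 0 := (Real.exp_pos _).ne'
  have hsub : g₁ t - g₂ t = 0 := by
    rcases mul_eq_zero.mp hHt with h | h
    · exact absurd h hexp
    · exact h
  have hmax : max t 0 = t := max_eq_left hmem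
  have := sub_eq_zero.mp hsub
  rw [hg₁def, hg₂def] at this
  simpa [hmax] using this
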